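/- Let C be a finite vertex set with |C| = n, and let a ∈ C. Consider the Erdős–Rényi random graph G(n, p) on C with p·(n-1) ≤ 1 - ε for some ε > 0. Then the expected number of vertices in the connected component of a is at most 1/ε. -/

import Mathlib

open MeasureTheory ProbabilityTheory

noncomputable section
open Finset
namespace ERsub

variable {n : ℕ}

abbrev Idx (n : ℕ) := {q : Fin n × Fin n // q.1 < q.2}

def normPair? (x y : Fin n) : Option (Idx n) :=
  if h : x < y then some ⟨(x, y), h⟩ else if h' : y < x then some ⟨(y, x), h'⟩ else none

lemma normPair?_mem {x y : Fin n} {q : Idx n} (h : q ∈ (normPair? x y).toList) :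
    q.1 = (x, y) ∨ q.1 = (y, x) := by
  unfold normPair? at h
  split_ifs at h <;> simp_all

lemma normPair?_length {x y : Fin n} (h : x ≠ y) :
    (normPair? x y).toList.length = 1 := by
  unfold normPair?
  rcases lt_or_gt_of_ne h with h' | h'
  · simp [h']
  · simp [h', not_lt_of_gt h']

def edgeL : List (Fin n) → List (Idx n)
  | x :: y :: rest => (normPair? x y).toList ++ edgeL (y :: rest)
  | _ => []

@[simp] lemma edgeL_nil : edgeL ([] : List (Fin n)) = [] := rfl
@[simp] lemma edgeL_single (x : Fin n) : edgeL [x] = [] := rfl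
@[simp] lemma edgeL_cons_cons (x y : Fin n) (rest : List (Fin n)) :
    edgeL (x :: y :: rest) = (normPair? x y).toList ++ edgeL (y :: rest) := rfl

lemma mem_edgeL : ∀ {l : List (Fin n)} {q : Idx n}, q ∈ edgeL l → q.1.1 ∈ l ∧ q.1.2 ∈ l
  | [], _, h => by simp at h
  | [x], _, h => by simp at h
  | x :: y :: rest, q, h => by
      rw [edgeL_cons_cons, List.mem_append] at h
      rcases h with h | h
      · rcases normPair?_mem h with h' | h' <;> simp [h']
      · have := mem_edgeL h
        exact ⟨List.mem_cons_of_mem _ this.1, List.mem_cons_of_mem _ this.2⟩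

lemma edgeL_nodup : ∀ {l : List (Fin n)}, l.Nodup → (edgeL l).Nodup
  | [], _ => by simp
  | [x], _ => by simp
  | x :: y :: rest, h => by
      rw [edgeL_cons_cons]
      have hx : x ∉ y :: rest := (List.nodup_cons.mp h).1
      refine List.Nodup.append ?_ (edgeL_nodup (List.nodup_cons.mp h).2) ?_
      · cases hnp : normPair? x y <;> simp
      · intro q hq hq'
        have hmem := mem_edgeL hq'
        rcases normPair?_mem hq with h' | h'
        · exact hx (by rw [h'] at hmem; exact hmem.1)
        · exact hx (by rw [h'] at hmem; exact hmem.2)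

lemma edgeL_length : ∀ {l : List (Fin n)}, l.Chain' (· ≠ ·) →
    (edgeL l).length = l.length - 1
  | [], _ => by simp
  | [x], _ => by simp
  | x :: y :: rest, h => by
      rw [edgeL_cons_cons, List.length_append,
        normPair?_length (List.isChain_cons_cons.mp h).1,
        edgeL_length (List.isChain_cons_cons.mp h).2]
      simp [Nat.add_comm]

lemma chain'_adj_iff {Gr : SimpleGraph (Fin n)} :
    ∀ {l : List (Fin n)}, l.Chain' (· ≠ ·) →
      (l.Chain' Gr.Adj ↔ ∀ q ∈ edgeL l, Gr.Adj q.1.1 q.1.2)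
  | [], _ => by simp; exact List.isChain_nil
  | [x], _ => by simp; exact List.isChain_singleton _
  | x :: y :: rest, h => by
      obtain ⟨hxy, h'⟩ := List.isChain_cons_cons.mp h
      rw [show List.Chain' Gr.Adj (x :: y :: rest) ↔ Gr.Adj x y ∧ List.Chain' Gr.Adj (y :: rest)
        from List.isChain_cons_cons, chain'_adj_iff h']
      constructor
      · rintro ⟨hadj, hrest⟩ q hq
        rw [edgeL_cons_cons, List.mem_append] at hq
        rcases hq with hq | hq
        · rcases normPair?_mem hq with h' | h' <;> rw [h']
          · exact hadj
          · exact hadj.symm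
        · exact hrest q hq
      · intro hall
        constructor
        · rcases lt_or_gt_of_ne hxy with hlt | hlt
          · have := hall ⟨(x, y), hlt⟩ (by simp [normPair?, hlt])
            exact this
          · have := hall ⟨(y, x), hlt⟩ (by simp [normPair?, hlt, not_lt_of_gt hlt])
            exact this.symm
        · exact fun q hq => hall q (by rw [edgeL_cons_cons, List.mem_append]; exact Or.inr hq)

lemma chain'_adj_reachable {Gr : SimpleGraph (Fin n)} (a : Fin n) :
    ∀ (t : List (Fin n)) (s : Fin n), (s :: t).Chain' Gr.Adj →
      Gr.Reachable s ((s :: t).getLastD a)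
  | [], s, _ => by simp [SimpleGraph.Reachable.refl]
  | x :: t', s, h => by
      obtain ⟨hadj, h'⟩ := List.isChain_cons_cons.mp h
      have := chain'_adj_reachable a t' x h'
      simpa using hadj.reachable.trans this



def pathFinset (V : Finset (Fin n)) (s : Fin n) : Finset (List (Fin n)) :=
  insert [s] (V.attach.biUnion fun x =>
    (pathFinset (V.erase x.1) x.1).image (s :: ·))
termination_by V.card
decreasing_by exact Finset.card_erase_lt_of_mem x.2

lemma pathFinset_eq (V : Finset (Fin n)) (s : Fin n) :
    pathFinset V s = insert [s] (V.attach.biUnion fun x =>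
      (pathFinset (V.erase x.1) x.1).image (s :: ·)) := by
  rw [pathFinset]

lemma exists_cons_of_mem_pathFinset {V : Finset (Fin n)} {s : Fin n} {l : List (Fin n)}
    (h : l ∈ pathFinset V s) : ∃ t, l = s :: t := by
  rw [pathFinset_eq, mem_insert] at h
  rcases h with h | h
  · exact ⟨[], h⟩
  · obtain ⟨x, -, hx⟩ := mem_biUnion.mp h
    obtain ⟨l', -, rfl⟩ := mem_image.mp hx
    exact ⟨l', rfl⟩

lemma mem_pathFinset_of_nodup :
    ∀ (t : List (Fin n)) (s : Fin n) (V : Finset (Fin n)),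
      (s :: t).Nodup → (∀ x ∈ t, x ∈ V) → s :: t ∈ pathFinset V s
  | [], s, V, _, _ => by rw [pathFinset_eq]; exact mem_insert_self _ _
  | x :: t', s, V, hnd, hsub => by
      have hx : x ∈ V := hsub x (by simp)
      have hnd' : (x :: t').Nodup := (List.nodup_cons.mp hnd).2
      have hxt : x ∉ t' := (List.nodup_cons.mp hnd').1
      have hsub' : ∀ y ∈ t', y ∈ V.erase x := fun y hy =>
        mem_erase.mpr ⟨fun h => hxt (h ▸ hy), hsub y (by simp [hy])⟩
      have ih := mem_pathFinset_of_nodup t' x (V.erase x) hnd' hsub'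
      rw [pathFinset_eq]
      refine mem_insert_of_mem (mem_biUnion.mpr ⟨⟨x, hx⟩, mem_attach _ _, ?_⟩)
      exact mem_image_of_mem _ ih

lemma mem_of_mem_pathFinset {V : Finset (Fin n)} {s : Fin n} {l : List (Fin n)}
    (h : l ∈ pathFinset V s) : ∀ y ∈ l, y = s ∨ y ∈ V := by
  induction V using Finset.strongInduction generalizing s l with
  | _ V ih =>
    rw [pathFinset_eq, mem_insert] at h
    rcases h with rfl | h
    · simp
    · obtain ⟨x, -, hx⟩ := mem_biUnion.mp h
      obtain ⟨l', hl', rfl⟩ := mem_image.mp hx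
      intro y hy
      rcases List.mem_cons.mp hy with rfl | hy
      · exact Or.inl rfl
      · rcases ih _ (erase_ssubset x.2) hl' y hy with rfl | hmem
        · exact Or.inr x.2
        · exact Or.inr (mem_of_mem_erase hmem)

lemma nodup_of_mem_pathFinset {V : Finset (Fin n)} {s : Fin n} {l : List (Fin n)}
    (hs : s ∉ V) (h : l ∈ pathFinset V s) : l.Nodup := by
  induction V using Finset.strongInduction generalizing s l with
  | _ V ih =>
    rw [pathFinset_eq, mem_insert] at h
    rcases h with rfl | h
    · simp
    · obtain ⟨x, -, hx⟩ := mem_biUnion.mp h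
      obtain ⟨l', hl', rfl⟩ := mem_image.mp hx
      have hx' : x.1 ∉ V.erase x.1 := notMem_erase _ _
      have hnd := ih _ (erase_ssubset x.2) hx' hl'
      refine List.nodup_cons.mpr ⟨fun hsl => ?_, hnd⟩
      rcases mem_of_mem_pathFinset hl' s hsl with rfl | hmem
      · exact hs x.2
      · exact hs (mem_of_mem_erase hmem)

lemma pathFinset_sum_le {p ε : ℝ} (hp0 : 0 ≤ p) (hε : 0 < ε)
    (V : Finset (Fin n)) (s : Fin n) (hV : p * V.card ≤ 1 - ε) :
    ∑ l ∈ pathFinset V s, p ^ (l.length - 1) ≤ 1 / ε := by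
  induction V using Finset.strongInduction generalizing s with
  | _ V ih =>
    rw [pathFinset_eq]
    have hnotmem : [s] ∉ V.attach.biUnion fun x =>
        (pathFinset (V.erase x.1) x.1).image (s :: ·) := by
      intro h
      obtain ⟨x, -, hx⟩ := mem_biUnion.mp h
      obtain ⟨l', hl', heq⟩ := mem_image.mp hx
      obtain ⟨t, rfl⟩ := exists_cons_of_mem_pathFinset hl'
      simp at heq
    rw [sum_insert hnotmem]
    have hdisj : (V.attach : Set {x // x ∈ V}).PairwiseDisjoint fun x =>
        (pathFinset (V.erase x.1) x.1).image (s :: ·) := by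
      intro x _ y _ hxy
      simp only [Finset.disjoint_left]
      intro l hlx hly
      obtain ⟨l1, hl1, heq1⟩ := mem_image.mp hlx
      obtain ⟨l2, hl2, heq2⟩ := mem_image.mp hly
      obtain ⟨t1, rfl⟩ := exists_cons_of_mem_pathFinset hl1
      obtain ⟨t2, rfl⟩ := exists_cons_of_mem_pathFinset hl2
      rw [← heq2] at heq1
      apply hxy
      apply Subtype.ext
      exact (List.cons.injEq _ _ _ _ ▸ (List.cons.injEq _ _ _ _ ▸ heq1).2).1
    rw [sum_biUnion hdisj]
    have hterm : ∀ x : {x // x ∈ V},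
        ∑ l ∈ (pathFinset (V.erase x.1) x.1).image (s :: ·), p ^ (l.length - 1)
          ≤ p * (1 / ε) := by
      intro x
      rw [sum_image (fun a _ b _ h => (List.cons.injEq _ _ _ _ ▸ h).2)]
      have hsum : ∀ l ∈ pathFinset (V.erase x.1) x.1,
          p ^ ((s :: l).length - 1) = p * p ^ (l.length - 1) := by
        intro l hl
        obtain ⟨t, rfl⟩ := exists_cons_of_mem_pathFinset hl
        simp [pow_succ, mul_comm]
      rw [sum_congr rfl hsum, ← mul_sum]
      have hcard : p * ((V.erase x.1).card : ℝ) ≤ 1 - ε := by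
        refine le_trans (mul_le_mul_of_nonneg_left ?_ hp0) hV
        exact_mod_cast card_le_card (erase_subset _ _)
      exact mul_le_mul_of_nonneg_left
        (ih _ (erase_ssubset x.2) x.1 hcard) hp0
    have hb : ∑ x ∈ V.attach,
        (∑ l ∈ (pathFinset (V.erase x.1) x.1).image (s :: ·), p ^ (l.length - 1))
          ≤ V.card * (p * (1 / ε)) := by
      calc _ ≤ ∑ _x ∈ V.attach, p * (1 / ε) := sum_le_sum fun x _ => hterm x
        _ = V.card * (p * (1 / ε)) := by rw [sum_const, card_attach, nsmul_eq_mul]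
    have hε' : (0:ℝ) < ε := hε
    have hfinal : (1:ℝ) + V.card * (p * (1 / ε)) ≤ 1 / ε := by
      have h1 : p * V.card ≤ 1 - ε := hV
      have h2 : (0:ℝ) ≤ (V.card : ℝ) := Nat.cast_nonneg _
      have h3 : (p * V.card) * ε⁻¹ ≤ (1 - ε) * ε⁻¹ :=
        mul_le_mul_of_nonneg_right h1 (inv_nonneg.mpr hε.le)
      have h4 : 1 + (1 - ε) * ε⁻¹ = ε⁻¹ := by field_simp; ring
      have h5 : (V.card : ℝ) * (p * (1 / ε)) = (p * V.card) * ε⁻¹ := by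
        field_simp
      rw [h5, one_div]
      linarith
    calc p ^ (([s] : List (Fin n)).length - 1) + _ ≤ 1 + V.card * (p * (1 / ε)) := by
          simpa using hb
      _ ≤ 1 / ε := hfinal



lemma getLastD_eq_getLast {α : Type*} (l : List α) (d : α) (h : l ≠ []) :
    l.getLastD d = l.getLast h := by
  rw [List.getLastD_eq_getLast?, List.getLast?_eq_getLast h]
  rfl

end ERsub
end

open Finset ERsub in
/-- In the Erdős–Rényi random graph `G(n,p)` with `p * (n-1) ≤ 1 - ε`
for some `ε > 0`, the expected number of vertices in the connected component of a
fixed vertex `a` is at most `1/ε`. -/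
theorem er_subcritical_component {Ω : Type*} [MeasureSpace Ω]
    [IsProbabilityMeasure (ℙ : Measure Ω)]
    (n : ℕ) (p ε : ℝ) (hp0 : 0 ≤ p) (hp1 : p ≤ 1) (hε : 0 < ε)
    (hsub : p * ((n : ℝ) - 1) ≤ 1 - ε)
    (G : Ω → SimpleGraph (Fin n))
    (hmeas : ∀ u v : Fin n, MeasurableSet {ω | (G ω).Adj u v})
    (hindep : iIndepSet
      (fun q : {q : Fin n × Fin n // q.1 < q.2} => {ω | (G ω).Adj q.1.1 q.1.2}) ℙ)
    (hprob : ∀ u v : Fin n, u ≠ v → ℙ {ω | (G ω).Adj u v} = ENNReal.ofReal p)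
    (a : Fin n) :
    ∫ ω, (Nat.card {v : Fin n | (G ω).Reachable a v} : ℝ) ∂ℙ ≤ 1 / ε := by
  classical
  set PF : Finset (List (Fin n)) := pathFinset (univ.erase a) a with hPF
  -- every member of PF is nodup
  have hPFnodup : ∀ l ∈ PF, l.Nodup :=
    fun l hl => nodup_of_mem_pathFinset (by simp) hl
  -- event equality: chain'-adjacency as intersection of edge events
  have hEvent : ∀ l ∈ PF, {ω | l.Chain' (G ω).Adj}
      = ⋂ q ∈ (edgeL l).toFinset, {ω | (G ω).Adj q.1.1 q.1.2} := by
    intro l hl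
    have hch : l.Chain' (· ≠ ·) := (hPFnodup l hl).isChain
    ext ω
    simp only [Set.mem_setOf_eq, Set.mem_iInter, List.mem_toFinset]
    exact chain'_adj_iff hch
  have hmeasE : ∀ l ∈ PF, MeasurableSet {ω | l.Chain' (G ω).Adj} := by
    intro l hl
    rw [hEvent l hl]
    exact MeasurableSet.iInter fun q => MeasurableSet.iInter fun _ => hmeas _ _
  -- probability bound for a single path event
  have hprobE : ∀ l ∈ PF, ℙ {ω | l.Chain' (G ω).Adj} ≤ ENNReal.ofReal (p ^ (l.length - 1)) := by
    intro l hl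
    rw [hEvent l hl, hindep.meas_biInter]
    have hfac : ∀ q ∈ (edgeL l).toFinset, ℙ {ω | (G ω).Adj q.1.1 q.1.2} = ENNReal.ofReal p := by
      intro q _
      exact hprob _ _ q.2.ne
    rw [Finset.prod_congr rfl hfac, Finset.prod_const,
      List.toFinset_card_of_nodup (edgeL_nodup (hPFnodup l hl)),
      edgeL_length (hPFnodup l hl).isChain, ← ENNReal.ofReal_pow hp0]
  -- reachability event as a finite union of path events
  have hreach : ∀ v : Fin n, {ω | (G ω).Reachable a v}
      = ⋃ l ∈ PF.filter (fun l => l.getLastD a = v), {ω | l.Chain' (G ω).Adj} := by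
    intro v
    ext ω
    simp only [Set.mem_setOf_eq, Set.mem_iUnion, exists_prop, Finset.mem_filter]
    constructor
    · intro hr
      obtain ⟨w⟩ := hr
      set π := w.toPath with hπ
      refine ⟨π.1.support, ⟨⟨?_, ?_⟩, ?_⟩⟩
      · rw [π.1.support_eq_cons]
        apply mem_pathFinset_of_nodup
        · rw [← π.1.support_eq_cons]; exact π.2.support_nodup
        · intro x hx
          refine mem_erase.mpr ⟨?_, mem_univ _⟩
          intro hxa
          have hnd := π.2.support_nodup
          rw [π.1.support_eq_cons, List.nodup_cons] at hnd
          exact hnd.1 (hxa ▸ hx)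
      · rw [getLastD_eq_getLast _ _ π.1.support_ne_nil]
        exact π.1.getLast_support
      · exact π.1.isChain_adj_support
    · rintro ⟨l, ⟨hl, hlast⟩, hchain⟩
      obtain ⟨t, rfl⟩ := exists_cons_of_mem_pathFinset hl
      have := chain'_adj_reachable a t a hchain
      rwa [hlast] at this
  have hmeasReach : ∀ v : Fin n, MeasurableSet {ω | (G ω).Reachable a v} := by
    intro v
    rw [hreach v]
    exact MeasurableSet.iUnion fun l => MeasurableSet.iUnion fun hl =>
      hmeasE l (Finset.mem_of_mem_filter l hl)
  -- pointwise expansion of the component size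
  have hcount : ∀ ω, (Nat.card {v : Fin n | (G ω).Reachable a v} : ℝ)
      = ∑ v : Fin n, Set.indicator {ω' | (G ω').Reachable a v} (fun _ => (1:ℝ)) ω := by
    intro ω
    have h1 : Nat.card {v : Fin n | (G ω).Reachable a v}
        = (univ.filter (fun v => (G ω).Reachable a v)).card := by
      rw [Nat.card_eq_fintype_card]
      simp [Fintype.card_subtype]
    rw [h1, Finset.card_filter]
    push_cast
    refine Finset.sum_congr rfl fun v _ => ?_
    simp only [Set.indicator_apply, Set.mem_setOf_eq]
  -- compute the integral
  have hint : ∫ ω, (Nat.card {v : Fin n | (G ω).Reachable a v} : ℝ) ∂ℙ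
      = ∑ v : Fin n, (ℙ {ω | (G ω).Reachable a v}).toReal := by
    rw [integral_congr_ae (Filter.Eventually.of_forall hcount)]
    rw [integral_finset_sum]
    · exact Finset.sum_congr rfl fun v _ => integral_indicator_one (hmeasReach v)
    · intro v _
      rw [integrable_indicator_iff (hmeasReach v)]
      exact integrableOn_const (measure_ne_top _ _)
  rw [hint]
  -- bound each term via the union bound
  have hv : ∀ v : Fin n, (ℙ {ω | (G ω).Reachable a v}).toReal
      ≤ ∑ l ∈ PF.filter (fun l => l.getLastD a = v), p ^ (l.length - 1) := by
    intro v
    have hb : ℙ {ω | (G ω).Reachable a v}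
        ≤ ENNReal.ofReal (∑ l ∈ PF.filter (fun l => l.getLastD a = v), p ^ (l.length - 1)) := by
      rw [hreach v]
      refine le_trans (measure_biUnion_finset_le _ _) ?_
      rw [ENNReal.ofReal_sum_of_nonneg (fun l _ => pow_nonneg hp0 _)]
      exact Finset.sum_le_sum fun l hl => hprobE l (Finset.mem_of_mem_filter l hl)
    exact ENNReal.toReal_le_of_le_ofReal
      (Finset.sum_nonneg fun l _ => pow_nonneg hp0 _) hb
  refine le_trans (Finset.sum_le_sum fun v _ => hv v) ?_
  have hfw : ∑ v : Fin n, ∑ l ∈ PF.filter (fun l => l.getLastD a = v), p ^ (l.length - 1)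
      = ∑ l ∈ PF, p ^ (l.length - 1) :=
    Finset.sum_fiberwise_of_maps_to (fun l _ => mem_univ _) _
  rw [hfw]
  apply pathFinset_sum_le hp0 hε
  have hcard : (univ.erase a).card = n - 1 := by
    rw [Finset.card_erase_of_mem (mem_univ a), Finset.card_univ, Fintype.card_fin]
  rw [hcard]
  have hn : 1 ≤ n := a.pos
  rw [Nat.cast_sub hn]
  simpa using hsub
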